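/- arXiv:2504.02806 — 2 statements merged into one kernel-verified Lean document; each statement's English description precedes it below -/
import Mathlib

section
/- Let r ≥ 1, let n be a natural number, and write s = n mod r. Then the number of edges of the Turán graph T(n,r) equals ⌊n²(r − 1)/(2r)⌋ if and only if s(r − s) < 2r (equivalently, either s ≤ 2 or r·(s − 2) < s²). -/
open Finset SimpleGraph

lemma fin_filter_card (n r : ℕ) (hr : 0 < r) (v : ℕ) :
    #{w : Fin n | (w : ℕ) % r = v % r} = n / r + if v % r < n % r then 1 else 0 := by
  have h1 : #{w : Fin n | (w : ℕ) % r = v % r} = #{x ∈ range n | x % r = v % r} := by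
    rw [← Finset.card_map Fin.valEmbedding, Finset.map_filter' , Fin.map_valEmbedding_univ]
    congr 1
    ext x
    simp only [mem_filter, Finset.mem_Iio, mem_range]
    constructor
    · rintro ⟨hx, a, ha, rfl⟩; exact ⟨hx, ha⟩
    · rintro ⟨hx, hm⟩; exact ⟨hx, ⟨x, hx⟩, hm, rfl⟩
  have h2 := Nat.count_modEq_card n hr v
  rw [Nat.count_eq_card_filter_range] at h2
  rw [h1, ← h2]
  rfl

lemma card_lt_part (n r : ℕ) (hr : 0 < r) :
    #{v : Fin n | (v : ℕ) % r < n % r} = (n % r) * (n / r + 1) := by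
  rw [Finset.card_eq_sum_card_fiberwise
    (f := fun v : Fin n => (v : ℕ) % r) (t := range (n % r))
    (fun x hx => by simpa using (mem_filter.mp hx).2)]
  have step : ∀ i ∈ range (n % r),
      #((univ.filter (fun v : Fin n => (v : ℕ) % r < n % r)).filter (fun v : Fin n => (v : ℕ) % r = i))
        = n / r + 1 := by
    intro i hi
    rw [mem_range] at hi
    have hir : i % r = i := Nat.mod_eq_of_lt (lt_of_lt_of_le hi (Nat.mod_lt n hr).le)
    have h1 : ((univ.filter (fun v : Fin n => (v : ℕ) % r < n % r)).filter (fun v : Fin n => (v : ℕ) % r = i))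
        = univ.filter (fun w : Fin n => (w : ℕ) % r = i % r) := by
      rw [hir]
      ext v
      simp only [mem_filter, mem_univ, true_and, hir]
      omega
    rw [h1, fin_filter_card n r hr i, hir, if_pos hi]
  rw [Finset.sum_congr rfl step, Finset.sum_const, card_range, smul_eq_mul]

lemma twice_edges (n r : ℕ) (hr : 0 < r) :
    2 * #(turanGraph n r).edgeFinset + n * (n / r) + (n % r) * (n / r + 1) = n * n := by
  classical
  have hdeg : ∀ v : Fin n,
      (turanGraph n r).degree v + (n / r + if (v : ℕ) % r < n % r then 1 else 0) = n := by
    intro v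
    have h1 : (turanGraph n r).degree v
        = #(univ.filter (fun w : Fin n => ¬ ((w : ℕ) % r = (v : ℕ) % r))) := by
      rw [← card_neighborFinset_eq_degree, neighborFinset_eq_filter]
      congr 1
      ext w
      simp only [mem_filter, mem_univ, true_and]
      show (v : ℕ) % r ≠ (w : ℕ) % r ↔ _
      exact ne_comm
    have h2 := Finset.card_filter_add_card_filter_not
      (s := (univ : Finset (Fin n))) (p := fun w : Fin n => (w : ℕ) % r = (v : ℕ) % r)
    rw [fin_filter_card n r hr (v : ℕ)] at h2
    rw [card_univ, Fintype.card_fin] at h2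
    omega
  have hsum : ∑ v : Fin n, ((turanGraph n r).degree v
      + (n / r + if (v : ℕ) % r < n % r then 1 else 0)) = n * n := by
    rw [Finset.sum_congr rfl (fun v _ => hdeg v), Finset.sum_const, card_univ,
      Fintype.card_fin, smul_eq_mul]
  rw [Finset.sum_add_distrib, Finset.sum_add_distrib,
    SimpleGraph.sum_degrees_eq_twice_card_edges, Finset.sum_const, card_univ,
    Fintype.card_fin, smul_eq_mul, Finset.sum_boole, card_lt_part n r hr] at hsum
  push_cast at hsum
  omega

theorem turanGraph_attains_floor_iff {n r : ℕ} (hr : 1 ≤ r) :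
    (((turanGraph n r).edgeFinset.card : ℤ) =
        ⌊((n : ℚ) ^ 2 * ((r : ℚ) - 1)) / (2 * r)⌋ ↔
      n % r * (r - n % r) < 2 * r) ∧
    (n % r * (r - n % r) < 2 * r ↔
      (n % r ≤ 2 ∨ r * (n % r - 2) < (n % r) ^ 2)) := by
  have hr0 : 0 < r := hr
  have hslt : n % r < r := Nat.mod_lt n hr0
  constructor
  · -- part 1
    have hE := twice_edges n r hr0
    set E := #(turanGraph n r).edgeFinset with hEdef
    have hnz : (n : ℤ) * n = 2 * (E : ℤ) + (n : ℤ) * (n / r : ℕ)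
        + ((n % r : ℕ) : ℤ) * ((n / r : ℕ) + 1) := by exact_mod_cast hE.symm
    have hn : (n : ℤ) = (r : ℤ) * (n / r : ℕ) + ((n % r : ℕ) : ℤ) := by
      exact_mod_cast (Nat.div_add_mod n r).symm
    have key : (n : ℤ) ^ 2 * ((r : ℤ) - 1)
        = ((n % r * (r - n % r) : ℕ) : ℤ) + 2 * r * (E : ℤ) := by
      have hcast : ((n % r * (r - n % r) : ℕ) : ℤ)
          = ((n % r : ℕ) : ℤ) * ((r : ℤ) - ((n % r : ℕ) : ℤ)) := by
        push_cast [Nat.cast_sub hslt.le]; ring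
      rw [hcast]
      linear_combination (r : ℤ) * hnz + (-(n : ℤ) - ((n % r : ℕ) : ℤ)) * hn
    have hfloor : ⌊((n : ℚ) ^ 2 * ((r : ℚ) - 1)) / (2 * r)⌋
        = (E : ℤ) + ((n % r * (r - n % r) / (2 * r) : ℕ) : ℤ) := by
      have h1 : ((n : ℚ) ^ 2 * ((r : ℚ) - 1)) / (2 * r)
          = (((n : ℤ) ^ 2 * ((r : ℤ) - 1) : ℤ) : ℚ) / ((2 * r : ℕ) : ℚ) := by
        push_cast; ring
      rw [h1, Rat.floor_intCast_div_natCast, key]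
      have h2r : ((2 * r : ℕ) : ℤ) ≠ 0 := by positivity
      rw [show ((2 * r : ℕ) : ℤ) = 2 * (r : ℤ) from by push_cast; ring] at h2r ⊢
      rw [Int.add_mul_ediv_left _ _ h2r, add_comm]
      congr 1
    rw [hfloor]
    have hd : n % r * (r - n % r) / (2 * r) = 0 ↔ n % r * (r - n % r) < 2 * r :=
      Nat.div_eq_zero_iff_lt (by positivity)
    constructor
    · intro h
      rw [← hd]
      omega
    · intro h
      rw [← hd] at h
      omega
  · -- part 2
    rcases Nat.lt_or_ge (n % r) 3 with h | h
    · set s := n % r with hs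
      interval_cases s <;> simp <;> omega
    · have h1 : n % r * (n % r) ≤ n % r * r := Nat.mul_le_mul_left _ hslt.le
      have h9 : 9 ≤ n % r * (n % r) := by
        calc 9 = 3 * 3 := rfl
        _ ≤ n % r * (n % r) := Nat.mul_le_mul h h
      rw [Nat.mul_sub, Nat.mul_sub, pow_two, mul_comm r (n % r)]
      generalize n % r * r = A at *
      generalize n % r * (n % r) = B at *
      omega
end

section
/- Let G be a finite simple graph on n vertices with at least one edge, and suppose G is not isomorphic to the graph Y on 3 vertices consisting of a single edge plus one isolated vertex. If |E(G)| = ⌊(n/2) · Σ_{v ∈ V(G)} (c(v) − 1)/c(v)⌋, where c(v) is the order of the largest clique of G containing v, then G is connected. -/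
set_option linter.unusedSectionVars false
set_option maxHeartbeats 1000000


open Finset SimpleGraph

/-- `cliqueOrderAt G v` is the order of the largest clique of `G` containing `v`
(`1` if `v` is isolated, witnessed by the singleton clique `{v}`). -/
noncomputable def cliqueOrderAt {V : Type*} (G : SimpleGraph V) (v : V) : ℕ :=
  sSup {r : ℕ | ∃ s : Finset V, G.IsNClique r s ∧ v ∈ s}

/-- The paraglider graph `X`: `K₄` on `{0,1,2,3}` minus the edge `{0,1}`,
plus a vertex `4` adjacent exactly to `0` and `1`. -/
def paraglider : SimpleGraph (Fin 5) where
  Adj a b := ((a, b) ∈ ([(0,2),(0,3),(1,2),(1,3),(2,3),(4,0),(4,1)] : List (Fin 5 × Fin 5)))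
    ∨ ((b, a) ∈ ([(0,2),(0,3),(1,2),(1,3),(2,3),(4,0),(4,1)] : List (Fin 5 × Fin 5)))
  symm := ⟨fun _ _ h => Or.symm h⟩
  loopless := ⟨by intro a; fin_cases a <;> decide⟩

instance : DecidableRel paraglider.Adj := fun _ _ =>
  inferInstanceAs (Decidable (_ ∨ _))

/-- The graph `Y`: three vertices with exactly one edge (between `0` and `1`). -/
def graphY : SimpleGraph (Fin 3) where
  Adj a b := (a = 0 ∧ b = 1) ∨ (a = 1 ∧ b = 0)
  symm := ⟨fun _ _ h => Or.symm (by tauto)⟩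
  loopless := ⟨by intro a; fin_cases a <;> decide⟩

instance : DecidableRel graphY.Adj := fun _ _ =>
  inferInstanceAs (Decidable (_ ∨ _))


section AuxLemmas

variable {V : Type*} [Fintype V] [DecidableEq V] (G : SimpleGraph V)

noncomputable def cOn (s : Finset V) (v : V) : ℕ :=
  sSup {r : ℕ | ∃ t : Finset V, t ⊆ s ∧ G.IsNClique r t ∧ v ∈ t}

lemma bddAbove_cOnSet (s : Finset V) (v : V) :
    BddAbove {r : ℕ | ∃ t : Finset V, t ⊆ s ∧ G.IsNClique r t ∧ v ∈ t} := by
  refine ⟨s.card, fun r hr => ?_⟩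
  obtain ⟨t, hts, hc, -⟩ := hr
  exact hc.2 ▸ Finset.card_le_card hts

lemma le_cOn {s t : Finset V} {v : V} {r : ℕ} (hts : t ⊆ s) (hc : G.IsNClique r t)
    (hv : v ∈ t) : r ≤ cOn G s v :=
  le_csSup (bddAbove_cOnSet G s v) ⟨t, hts, hc, hv⟩

lemma one_le_cOn {s : Finset V} {v : V} (hv : v ∈ s) : 1 ≤ cOn G s v :=
  le_cOn G (Finset.singleton_subset_iff.2 hv) (isNClique_singleton.2 rfl)
    (Finset.mem_singleton_self v)

lemma cOn_exists {s : Finset V} {v : V} (hv : v ∈ s) :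
    ∃ t : Finset V, t ⊆ s ∧ G.IsNClique (cOn G s v) t ∧ v ∈ t := by
  have hne : Set.Nonempty {r : ℕ | ∃ t : Finset V, t ⊆ s ∧ G.IsNClique r t ∧ v ∈ t} :=
    ⟨1, {v}, Finset.singleton_subset_iff.2 hv, isNClique_singleton.2 rfl,
      Finset.mem_singleton_self v⟩
  exact Nat.sSup_mem hne (bddAbove_cOnSet G s v)

lemma cOn_le {s : Finset V} {v : V} {m : ℕ}
    (h : ∀ (t : Finset V), t ⊆ s → G.IsClique t → v ∈ t → t.card ≤ m) : cOn G s v ≤ m := by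
  rcases Set.eq_empty_or_nonempty
      {r : ℕ | ∃ t : Finset V, t ⊆ s ∧ G.IsNClique r t ∧ v ∈ t} with he | hne
  · rw [cOn, he, csSup_empty]; exact Nat.zero_le m
  · refine csSup_le hne ?_
    rintro r ⟨t, hts, hc, hv⟩
    exact hc.2 ▸ h t hts hc.1 hv

lemma cOn_mono {s s' : Finset V} (hss : s ⊆ s') (v : V) : cOn G s v ≤ cOn G s' v := by
  rcases Set.eq_empty_or_nonempty
      {r : ℕ | ∃ t : Finset V, t ⊆ s ∧ G.IsNClique r t ∧ v ∈ t} with he | hne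
  · rw [cOn, he, csSup_empty]; exact Nat.zero_le _
  · exact csSup_le_csSup (bddAbove_cOnSet G s' v) hne
      (fun r ⟨t, hts, hc, hv⟩ => ⟨t, hts.trans hss, hc, hv⟩)

lemma cliqueOrderAt_eq_cOn_univ (v : V) : cliqueOrderAt G v = cOn G Finset.univ v := by
  unfold cliqueOrderAt cOn
  congr 1
  ext r
  exact ⟨fun ⟨t, hc, hv⟩ => ⟨t, Finset.subset_univ t, hc, hv⟩, fun ⟨t, _, hc, hv⟩ => ⟨t, hc, hv⟩⟩

variable [DecidableRel G.Adj]

def degIn (s : Finset V) (v : V) : ℕ := (s.filter (G.Adj v)).card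

lemma keyineq {c W : ℕ} (h1 : 1 ≤ c) (h2 : c ≤ W) :
    2*((c:ℝ)-1) ≤ (W:ℝ)*(1 - (c:ℝ)⁻¹) + ((W:ℝ) - 1) := by
  have h1' : (1:ℝ) ≤ (c:ℝ) := by exact_mod_cast h1
  have h2' : (c:ℝ) ≤ (W:ℝ) := by exact_mod_cast h2
  have hc : (0:ℝ) < c := by linarith
  have expand : (W:ℝ)*(1 - (c:ℝ)⁻¹) + ((W:ℝ)-1) - 2*((c:ℝ)-1)
      = (2*(c:ℝ)-1)*((W:ℝ)-(c:ℝ))/c := by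
    field_simp; ring
  have hnn : (0:ℝ) ≤ (2*(c:ℝ)-1)*((W:ℝ)-(c:ℝ))/c :=
    div_nonneg (mul_nonneg (by linarith) (by linarith)) hc.le
  linarith

/-- the local Turán inequality, localized to a vertex subset `s`. -/
lemma main_ineq : ∀ (n : ℕ) (s : Finset V), s.card = n →
    (∑ v ∈ s, (degIn G s v : ℝ)) ≤ s.card * ∑ v ∈ s, (1 - (cOn G s v : ℝ)⁻¹) := by
  intro n
  induction n using Nat.strong_induction_on with
  | _ n ih =>
    intro s hcard
    rcases s.eq_empty_or_nonempty with rfl | hs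
    · simp
    obtain ⟨v0, hv0, hWeq⟩ := Finset.exists_mem_eq_sup s hs (cOn G s)
    set W := s.sup (cOn G s) with hWdef
    have hW1 : 1 ≤ W := le_trans (one_le_cOn G hv0) (Finset.le_sup hv0)
    have hcle : ∀ v ∈ s, cOn G s v ≤ W := fun v hv => Finset.le_sup hv
    obtain ⟨Q, hQs, hQcl, hv0Q⟩ := cOn_exists G hv0
    rw [← hWeq] at hQcl
    have hQcard : Q.card = W := hQcl.2
    set s' := s \ Q with hs'def
    have hQne : Q.Nonempty := ⟨v0, hv0Q⟩
    have hscard : s.card = s'.card + W := by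
      rw [hs'def, Finset.card_sdiff_of_subset hQs, hQcard]
      have := Finset.card_le_card hQs
      omega
    have hs'lt : s'.card < n := by omega
    -- cOn = W on Q
    have hQc : ∀ v ∈ Q, cOn G s v = W := fun v hv =>
      le_antisymm (hcle v (hQs hv)) (le_cOn G hQs hQcl hv)
    -- degree in Q bound for outside vertices
    have houtside : ∀ v ∈ s', (degIn G Q v : ℝ) ≤ (cOn G s v : ℝ) - 1 := by
      intro v hv
      have hvs : v ∈ s := (Finset.mem_sdiff.1 hv).1
      have hvQ : v ∉ Q := (Finset.mem_sdiff.1 hv).2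
      set t : Finset V := insert v (Q.filter (G.Adj v)) with htdef
      have htcl : G.IsClique (t : Set V) := by
        rw [htdef, Finset.coe_insert]
        refine SimpleGraph.IsClique.insert
          (hQcl.1.subset (Finset.coe_subset.mpr (Finset.filter_subset _ _))) ?_
        intro b hb _
        exact (Finset.mem_filter.1 (Finset.mem_coe.1 hb)).2
      have htcard : t.card = degIn G Q v + 1 := by
        rw [htdef, Finset.card_insert_of_notMem (fun h => hvQ (Finset.filter_subset _ _ h))]
        rfl
      have hts : t ⊆ s := by
        rw [htdef]
        exact Finset.insert_subset hvs ((Finset.filter_subset _ _).trans hQs)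
      have : degIn G Q v + 1 ≤ cOn G s v :=
        le_cOn G hts ⟨htcl, htcard⟩ (Finset.mem_insert_self _ _)
      have h1 : 1 ≤ cOn G s v := one_le_cOn G hvs
      have : (degIn G Q v + 1 : ℝ) ≤ (cOn G s v : ℝ) := by exact_mod_cast this
      linarith
    -- degree inside Q bound
    have hinside : ∀ v ∈ Q, (degIn G Q v : ℝ) ≤ (W:ℝ) - 1 := by
      intro v hv
      have hsub : Q.filter (G.Adj v) ⊆ Q.erase v := by
        intro u hu
        rcases Finset.mem_filter.1 hu with ⟨huQ, hadj⟩
        exact Finset.mem_erase.2 ⟨fun h => G.loopless.irrefl v (h ▸ hadj), huQ⟩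
      have : degIn G Q v ≤ W - 1 := by
        have := Finset.card_le_card hsub
        rw [Finset.card_erase_of_mem hv, hQcard] at this
        exact this
      have hcast : ((W - 1 : ℕ) : ℝ) = (W:ℝ) - 1 := by
        have : (1:ℕ) ≤ W := hW1
        push_cast [this]
        ring
      calc (degIn G Q v : ℝ) ≤ ((W - 1 : ℕ) : ℝ) := by exact_mod_cast this
        _ = (W:ℝ) - 1 := hcast
    -- split degIn over s = s' ∪ Q
    have hdegsplit : ∀ v, degIn G s v = degIn G s' v + degIn G Q v := by
      intro v
      rw [degIn, ← Finset.sdiff_union_of_subset hQs, Finset.filter_union]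
      exact Finset.card_union_of_disjoint
        (Finset.disjoint_filter_filter Finset.sdiff_disjoint)
    -- handshake between s' and Q
    have hhs : ∑ v ∈ s', degIn G Q v = ∑ u ∈ Q, degIn G s' u := by
      simp only [degIn, Finset.card_filter]
      rw [Finset.sum_comm]
      exact Finset.sum_congr rfl fun u _ => Finset.sum_congr rfl fun v _ => if_congr (G.adj_comm v u) rfl rfl
    -- IH applied to s'
    have hIH : (∑ v ∈ s', (degIn G s' v : ℝ)) ≤ s'.card * ∑ v ∈ s', (1 - (cOn G s' v : ℝ)⁻¹) :=
      ih s'.card hs'lt s' rfl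
    have hmono : ∑ v ∈ s', (1 - (cOn G s' v : ℝ)⁻¹) ≤ ∑ v ∈ s', (1 - (cOn G s v : ℝ)⁻¹) := by
      refine Finset.sum_le_sum fun v hv => ?_
      have h1 : 1 ≤ cOn G s' v := one_le_cOn G hv
      have h2 : cOn G s' v ≤ cOn G s v := cOn_mono G (Finset.sdiff_subset) v
      have h1' : (0:ℝ) < (cOn G s' v : ℝ) := by exact_mod_cast h1
      have h2' : (cOn G s' v : ℝ) ≤ (cOn G s v : ℝ) := by exact_mod_cast h2
      have := inv_anti₀ h1' h2'
      linarith
    -- abbreviations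
    set S : ℝ := ∑ v ∈ s', (1 - (cOn G s v : ℝ)⁻¹) with hSdef
    have hSnn : 0 ≤ S := by
      rw [hSdef]
      refine Finset.sum_nonneg fun v hv => ?_
      have h1 : 1 ≤ cOn G s v := one_le_cOn G ((Finset.mem_sdiff.1 hv).1)
      have h1' : (1:ℝ) ≤ (cOn G s v : ℝ) := by exact_mod_cast h1
      have : (cOn G s v : ℝ)⁻¹ ≤ 1 := by
        have := inv_anti₀ one_pos h1'
        simpa using this
      linarith
    -- the per-vertex key inequality summed over s'
    have hkey : ∑ v ∈ s', 2*((cOn G s v : ℝ) - 1)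
        ≤ (W:ℝ) * S + s'.card * ((W:ℝ) - 1) := by
      have : ∑ v ∈ s', 2*((cOn G s v : ℝ) - 1)
          ≤ ∑ v ∈ s', ((W:ℝ)*(1 - (cOn G s v : ℝ)⁻¹) + ((W:ℝ) - 1)) := by
        refine Finset.sum_le_sum fun v hv => ?_
        exact keyineq (one_le_cOn G ((Finset.mem_sdiff.1 hv).1)) (hcle v ((Finset.mem_sdiff.1 hv).1))
      calc ∑ v ∈ s', 2*((cOn G s v : ℝ) - 1)
          ≤ ∑ v ∈ s', ((W:ℝ)*(1 - (cOn G s v : ℝ)⁻¹) + ((W:ℝ) - 1)) := this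
        _ = (W:ℝ) * S + s'.card * ((W:ℝ) - 1) := by
            rw [Finset.sum_add_distrib, ← Finset.mul_sum, Finset.sum_const, nsmul_eq_mul, hSdef]
    -- now assemble
    have hsumsplit : ∀ f : V → ℝ, ∑ v ∈ s, f v = ∑ v ∈ s', f v + ∑ v ∈ Q, f v :=
      fun f => (Finset.sum_sdiff hQs).symm
    have hLHS : (∑ v ∈ s, (degIn G s v : ℝ))
        = (∑ v ∈ s', (degIn G s' v : ℝ)) + 2 * (∑ v ∈ s', (degIn G Q v : ℝ))
          + (∑ v ∈ Q, (degIn G Q v : ℝ)) := by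
      rw [hsumsplit]
      have e1 : ∑ v ∈ s', (degIn G s v : ℝ)
          = ∑ v ∈ s', (degIn G s' v : ℝ) + ∑ v ∈ s', (degIn G Q v : ℝ) := by
        rw [← Finset.sum_add_distrib]
        refine Finset.sum_congr rfl fun v _ => ?_
        rw [hdegsplit v]; push_cast; ring
      have e2 : ∑ v ∈ Q, (degIn G s v : ℝ)
          = ∑ v ∈ Q, (degIn G s' v : ℝ) + ∑ v ∈ Q, (degIn G Q v : ℝ) := by
        rw [← Finset.sum_add_distrib]
        refine Finset.sum_congr rfl fun v _ => ?_
        rw [hdegsplit v]; push_cast; ring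
      have e3 : ∑ v ∈ Q, (degIn G s' v : ℝ) = ∑ v ∈ s', (degIn G Q v : ℝ) := by
        rw [← Nat.cast_sum, ← Nat.cast_sum, hhs]
      rw [e1, e2, e3]; ring
    have houts : 2 * (∑ v ∈ s', (degIn G Q v : ℝ)) ≤ ∑ v ∈ s', 2*((cOn G s v : ℝ) - 1) := by
      rw [Finset.mul_sum]
      exact Finset.sum_le_sum fun v hv => by
        have := houtside v hv
        linarith
    have hins : (∑ v ∈ Q, (degIn G Q v : ℝ)) ≤ (W:ℝ) * ((W:ℝ) - 1) := by
      calc (∑ v ∈ Q, (degIn G Q v : ℝ)) ≤ ∑ v ∈ Q, ((W:ℝ) - 1) :=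
            Finset.sum_le_sum hinside
        _ = (W:ℝ) * ((W:ℝ) - 1) := by rw [Finset.sum_const, nsmul_eq_mul, hQcard]
    have hRHS : (s.card : ℝ) * ∑ v ∈ s, (1 - (cOn G s v : ℝ)⁻¹)
        = (s.card : ℝ) * S + (s.card : ℝ) * ((W:ℝ) - 1) := by
      rw [hsumsplit]
      have eq : ∑ v ∈ Q, (1 - (cOn G s v : ℝ)⁻¹) = (W:ℝ) - 1 := by
        have : ∀ v ∈ Q, (1 - (cOn G s v : ℝ)⁻¹) = 1 - (W:ℝ)⁻¹ := by
          intro v hv; rw [hQc v hv]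
        rw [Finset.sum_congr rfl this, Finset.sum_const, nsmul_eq_mul, hQcard]
        have hW1' : (1:ℝ) ≤ (W:ℝ) := by exact_mod_cast hW1
        have hWpos : (0:ℝ) < (W:ℝ) := by linarith
        field_simp
      rw [eq, hSdef]; ring
    have hns : (s.card : ℝ) = (s'.card : ℝ) + (W:ℝ) := by exact_mod_cast hscard
    rw [hLHS, hRHS]
    have hIH' : (∑ v ∈ s', (degIn G s' v : ℝ)) ≤ (s'.card:ℝ) * S :=
      hIH.trans (by
        rw [hSdef]
        exact mul_le_mul_of_nonneg_left hmono (Nat.cast_nonneg _))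
    nlinarith [hIH', houts.trans hkey, hins, hSnn]

lemma cOn_eq_of_closed {s s' : Finset V} (hss : s' ⊆ s) {v : V} (hv : v ∈ s')
    (h : ∀ t : Finset V, t ⊆ s → G.IsClique t → v ∈ t → t ⊆ s') :
    cOn G s v = cOn G s' v :=
  le_antisymm (cOn_le G fun t ht hc hvt => le_cOn G (h t ht hc hvt) ⟨hc, rfl⟩ hvt)
    (cOn_mono G hss v)

lemma cOn_term_nonneg {s : Finset V} {v : V} (hv : v ∈ s) : (0:ℝ) ≤ 1 - (cOn G s v : ℝ)⁻¹ := by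
  have h1 : (1:ℝ) ≤ (cOn G s v : ℝ) := by exact_mod_cast one_le_cOn G hv
  have h2 : (cOn G s v : ℝ)⁻¹ ≤ 1 := by simpa using inv_anti₀ one_pos h1
  linarith

lemma term_half {c : ℕ} (h : 2 ≤ c) : (1:ℝ)/2 ≤ 1 - (c:ℝ)⁻¹ := by
  have h2 : (2:ℝ) ≤ (c:ℝ) := by exact_mod_cast h
  have h3 : (c:ℝ)⁻¹ ≤ (2:ℝ)⁻¹ := inv_anti₀ (by norm_num) h2
  norm_num at h3 ⊢
  linarith

lemma pair_clique {a b : V} (h : G.Adj a b) : G.IsNClique 2 {a,b} := by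
  rw [isNClique_iff]
  constructor
  · rw [Finset.coe_insert, Finset.coe_singleton]
    exact (G.isClique_singleton b).insert (fun c hc _ => by rwa [Set.mem_singleton_iff.1 hc])
  · exact Finset.card_pair h.ne

lemma div_form {k : ℕ} (h : 1 ≤ k) : ((k:ℝ) - 1)/(k:ℝ) = 1 - (k:ℝ)⁻¹ := by
  have h1 : (1:ℝ) ≤ (k:ℝ) := by exact_mod_cast h
  have hk : (k:ℝ) ≠ 0 := by linarith
  field_simp

end AuxLemmas

theorem extremal_implies_connected {V : Type*} [Fintype V] [DecidableEq V]
    (G : SimpleGraph V) [DecidableRel G.Adj]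
    (hE : G.edgeFinset.Nonempty) (hY : ¬ Nonempty (G ≃g graphY))
    (heq : (G.edgeFinset.card : ℤ) =
      ⌊((Fintype.card V : ℝ) / 2) *
        ∑ v : V, ((cliqueOrderAt G v : ℝ) - 1) / (cliqueOrderAt G v)⌋) :
    G.Connected := by
  classical
  by_contra hconn
  obtain ⟨x, y, hxy⟩ : ∃ x y, G.Adj x y := by
    obtain ⟨e, he⟩ := hE
    rw [mem_edgeFinset] at he
    induction e using Sym2.ind with
    | _ x y => exact ⟨x, y, he⟩
  have hpre : ¬ G.Preconnected := fun h => hconn ((SimpleGraph.connected_iff G).mpr ⟨h, ⟨x⟩⟩)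
  obtain ⟨z, hz⟩ : ∃ z, ¬ G.Reachable x z := by
    by_contra h
    push_neg at h
    exact hpre fun u w => (h u).symm.trans (h w)
  set A : Finset V := Finset.univ.filter (fun v => G.Reachable x v) with hAdef
  set B : Finset V := Finset.univ \ A with hBdef
  have hxA : x ∈ A := by
    simp only [hAdef, Finset.mem_filter, Finset.mem_univ, true_and]
    exact Reachable.refl x
  have hyA : y ∈ A := by
    simp only [hAdef, Finset.mem_filter, Finset.mem_univ, true_and]
    exact hxy.reachable
  have hzB : z ∈ B := by
    simp only [hBdef, hAdef, Finset.mem_sdiff, Finset.mem_filter, Finset.mem_univ, true_and]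
    simpa using hz
  have hzA : z ∉ A := (Finset.mem_sdiff.1 hzB).2
  have hAB : ∀ v ∈ A, ∀ u, G.Adj v u → u ∈ A := by
    intro v hv u hadj
    simp only [hAdef, Finset.mem_filter, Finset.mem_univ, true_and] at hv ⊢
    exact hv.trans hadj.reachable
  have hBB : ∀ v ∈ B, ∀ u, G.Adj v u → u ∈ B := by
    intro v hv u hadj
    simp only [hBdef, hAdef, Finset.mem_sdiff, Finset.mem_filter, Finset.mem_univ,
      true_and] at hv ⊢
    exact fun hru => hv (hru.trans hadj.symm.reachable)
  -- clique closure
  have hclos : ∀ (s : Finset V), (∀ v ∈ s, ∀ u, G.Adj v u → u ∈ s) →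
      ∀ v ∈ s, ∀ t : Finset V, t ⊆ Finset.univ → G.IsClique t → v ∈ t → t ⊆ s := by
    intro s hcl v hv t _ hclq hvt u hut
    rcases eq_or_ne u v with rfl | hne
    · exact hv
    · exact hcl v hv u (hclq (Finset.mem_coe.2 hvt) (Finset.mem_coe.2 hut) hne.symm)
  have hcA : ∀ v ∈ A, cliqueOrderAt G v = cOn G A v := fun v hv => by
    rw [cliqueOrderAt_eq_cOn_univ]
    exact cOn_eq_of_closed G (Finset.subset_univ A) hv (hclos A hAB v hv)
  have hcB : ∀ v ∈ B, cliqueOrderAt G v = cOn G B v := fun v hv => by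
    rw [cliqueOrderAt_eq_cOn_univ]
    exact cOn_eq_of_closed G (Finset.subset_univ B) hv (hclos B hBB v hv)
  -- degree localization
  have hdloc : ∀ (s : Finset V), (∀ v ∈ s, ∀ u, G.Adj v u → u ∈ s) →
      ∀ v ∈ s, degIn G Finset.univ v = degIn G s v := by
    intro s hcl v hv
    unfold degIn
    congr 1
    ext u
    simp only [Finset.mem_filter, Finset.mem_univ, true_and]
    exact ⟨fun h => ⟨hcl v hv u h, h⟩, fun h => h.2⟩
  set a := A.card with hadef
  set b := B.card with hbdef
  have hab : b + a = Fintype.card V := by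
    rw [← Finset.card_univ, hbdef, hadef]
    exact Finset.card_sdiff_add_card_eq_card (Finset.subset_univ A)
  set SA : ℝ := ∑ v ∈ A, (1 - (cOn G A v : ℝ)⁻¹) with hSAdef
  set SB : ℝ := ∑ v ∈ B, (1 - (cOn G B v : ℝ)⁻¹) with hSBdef
  set E : ℝ := (G.edgeFinset.card : ℝ) with hEdef
  have hTotal : ∑ v : V, ((cliqueOrderAt G v : ℝ) - 1) / (cliqueOrderAt G v) = SB + SA := by
    rw [← Finset.sum_sdiff (Finset.subset_univ A), hSBdef, hSAdef]
    congr 1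
    · refine Finset.sum_congr rfl fun v hv => ?_
      rw [hcB v hv, div_form (one_le_cOn G hv)]
    · refine Finset.sum_congr rfl fun v hv => ?_
      rw [hcA v hv, div_form (one_le_cOn G hv)]
  have hmA : (∑ v ∈ A, (degIn G A v : ℝ)) ≤ (a:ℝ) * SA := main_ineq G A.card A rfl
  have hmB : (∑ v ∈ B, (degIn G B v : ℝ)) ≤ (b:ℝ) * SB := main_ineq G B.card B rfl
  have h2e : 2 * E = (∑ v ∈ B, (degIn G B v : ℝ)) + ∑ v ∈ A, (degIn G A v : ℝ) := by
    have h := G.sum_degrees_eq_twice_card_edges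
    have h' : ∑ v : V, (G.degree v : ℝ) = 2 * E := by
      rw [hEdef]
      exact_mod_cast congrArg (Nat.cast : ℕ → ℝ) h
    rw [← h', ← Finset.sum_sdiff (Finset.subset_univ A)]
    congr 1
    · refine Finset.sum_congr rfl fun v hv => ?_
      rw [show G.degree v = degIn G Finset.univ v by rw [SimpleGraph.degree]; rw [neighborFinset_eq_filter]; rfl,
        hdloc B hBB v hv]
    · refine Finset.sum_congr rfl fun v hv => ?_
      rw [show G.degree v = degIn G Finset.univ v by rw [SimpleGraph.degree]; rw [neighborFinset_eq_filter]; rfl,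
        hdloc A hAB v hv]
  have hSBnn : 0 ≤ SB := Finset.sum_nonneg fun v hv => cOn_term_nonneg G hv
  have hpairA : ({x, y} : Finset V) ⊆ A :=
    Finset.insert_subset hxA (Finset.singleton_subset_iff.2 hyA)
  have hxc2 : 2 ≤ cOn G A x :=
    le_cOn G hpairA (pair_clique G hxy) (Finset.mem_insert_self x {y})
  have hyc2 : 2 ≤ cOn G A y :=
    le_cOn G hpairA (pair_clique G hxy) (by simp)
  have hSA1 : 1 ≤ SA := by
    have hsum : ∑ v ∈ ({x,y} : Finset V), (1 - (cOn G A v : ℝ)⁻¹) ≤ SA :=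
      Finset.sum_le_sum_of_subset_of_nonneg hpairA
        (fun v hv _ => cOn_term_nonneg G hv)
    rw [Finset.sum_pair hxy.ne] at hsum
    have h1 := term_half hxc2
    have h2 := term_half hyc2
    linarith
  have hbn : (1:ℕ) ≤ b := Finset.card_pos.2 ⟨z, hzB⟩ 
  suffices hgoal : 2 * E + 2 ≤ (Fintype.card V : ℝ) * (SB + SA) by
    have hfl : (G.edgeFinset.card : ℤ) + 1 ≤
        ⌊((Fintype.card V : ℝ) / 2) *
          ∑ v : V, ((cliqueOrderAt G v : ℝ) - 1) / (cliqueOrderAt G v)⌋ := by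
      rw [Int.le_floor, hTotal]
      push_cast
      rw [hEdef] at hgoal
      linarith
    rw [← heq] at hfl
    omega
  rcases le_or_gt 2 b with hb2 | hb1
  · -- b ≥ 2
    have hb2' : (2:ℝ) ≤ (b:ℝ) := by exact_mod_cast hb2
    have hcardV : (Fintype.card V : ℝ) = (b:ℝ) + (a:ℝ) := by exact_mod_cast hab.symm
    have hbSA : 2 ≤ (b:ℝ) * SA := by nlinarith
    have haSB : 0 ≤ (a:ℝ) * SB := mul_nonneg (Nat.cast_nonneg a) hSBnn
    rw [hcardV]
    nlinarith
  · -- b = 1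
    have hb1' : b = 1 := by omega
    obtain ⟨w0, hw0⟩ := Finset.card_eq_one.1 hb1'
    obtain rfl : z = w0 := by rw [hw0] at hzB; exact Finset.mem_singleton.1 hzB
    have hSB0 : SB = 0 := by
      rw [hSBdef, hw0, Finset.sum_singleton]
      have hc1 : cOn G {z} z = 1 :=
        le_antisymm (cOn_le G fun t ht _ _ => by simpa using Finset.card_le_card ht)
          (one_le_cOn G (Finset.mem_singleton_self z))
      rw [hc1]
      norm_num
    have hdegB0 : (∑ v ∈ B, (degIn G B v : ℝ)) = 0 := by
      rw [hw0, Finset.sum_singleton]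
      simp [degIn, Finset.filter_singleton]
    have h2e' : 2 * E = ∑ v ∈ A, (degIn G A v : ℝ) := by rw [h2e, hdegB0, zero_add]
    have hcardV : (Fintype.card V : ℝ) = (a:ℝ) + 1 := by
      exact_mod_cast (by omega : Fintype.card V = a + 1)
    by_cases hiso : ∃ v0 ∈ A, cOn G A v0 = 1
    · -- A contains an isolated vertex
      obtain ⟨v0, hv0A, hv0c⟩ := hiso
      have hv0iso : ∀ u, ¬ G.Adj v0 u := by
        intro u hadj
        have huA : u ∈ A := hAB v0 hv0A u hadj
        have h2 : 2 ≤ cOn G A v0 :=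
          le_cOn G (Finset.insert_subset hv0A (Finset.singleton_subset_iff.2 huA))
            (pair_clique G hadj) (Finset.mem_insert_self _ _)
        omega
      set A' := A.erase v0 with hA'def
      have hA'sub : A' ⊆ A := Finset.erase_subset _ _
      have hclosA' : ∀ v ∈ A', ∀ t : Finset V, t ⊆ A → G.IsClique t → v ∈ t → t ⊆ A' := by
        intro v hv t hts hcl hvt u hut
        refine Finset.mem_erase.2 ⟨?_, hts hut⟩
        rintro rfl
        exact hv0iso v (hcl (Finset.mem_coe.2 hut) (Finset.mem_coe.2 hvt)
          (fun h => (Finset.mem_erase.1 hv).1 h.symm))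
      have hcA' : ∀ v ∈ A', cOn G A v = cOn G A' v := fun v hv =>
        cOn_eq_of_closed G hA'sub hv (hclosA' v hv)
      have hdA' : ∀ v ∈ A', degIn G A v = degIn G A' v := by
        intro v hv
        unfold degIn
        congr 1
        ext u
        simp only [Finset.mem_filter, hA'def, Finset.mem_erase]
        constructor
        · rintro ⟨huA, hadj⟩
          refine ⟨⟨?_, huA⟩, hadj⟩
          rintro rfl
          exact hv0iso v hadj.symm
        · rintro ⟨⟨_, huA⟩, hadj⟩
          exact ⟨huA, hadj⟩
      have hdeg0 : degIn G A v0 = 0 := by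
        rw [degIn, Finset.card_eq_zero, Finset.filter_eq_empty_iff]
        intro u _
        exact hv0iso u
      have hsplit : ∑ v ∈ A, (degIn G A v : ℝ) = ∑ v ∈ A', (degIn G A' v : ℝ) := by
        rw [← Finset.sum_erase_add A _ hv0A, hdeg0]
        push_cast
        rw [add_zero]
        exact Finset.sum_congr rfl fun v hv => by rw [hdA' v hv]
      have hSAsplit : SA = ∑ v ∈ A', (1 - (cOn G A' v : ℝ)⁻¹) := by
        rw [hSAdef, ← Finset.sum_erase_add A _ hv0A, hv0c]
        norm_num
        congr 1
        exact Finset.sum_congr rfl fun v hv => by rw [hcA' v hv]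
      have hm' : (∑ v ∈ A', (degIn G A' v : ℝ))
          ≤ (A'.card : ℝ) * ∑ v ∈ A', (1 - (cOn G A' v : ℝ)⁻¹) :=
        main_ineq G A'.card A' rfl
      have ha1 : 1 ≤ a := by
        have h := Finset.card_le_card hpairA
        rw [Finset.card_pair hxy.ne] at h
        omega
      have hA'card : (A'.card : ℝ) = (a:ℝ) - 1 := by
        rw [hA'def, Finset.card_erase_of_mem hv0A, ← hadef]
        push_cast [ha1]
        ring
      rw [← hSAsplit, hA'card] at hm'
      rw [hSB0, zero_add, hcardV]
      nlinarith [hm', h2e', hsplit, hSA1]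
    · -- no isolated vertex in A
      push_neg at hiso
      have h2le : ∀ v ∈ A, 2 ≤ cOn G A v := fun v hv => by
        have h1 := one_le_cOn G hv
        have h2 := hiso v hv
        omega
      by_cases h3 : ∃ v ∈ A, 3 ≤ cOn G A v
      · -- a triangle exists
        obtain ⟨v, hvA, hv3⟩ := h3
        obtain ⟨t, htA, htcl, hvt⟩ := cOn_exists G hvA
        have htcard : t.card = cOn G A v := htcl.2
        have hSA2 : 2 ≤ SA := by
          have hsum : ∑ u ∈ t, (1 - (cOn G A u : ℝ)⁻¹) ≤ SA :=
            Finset.sum_le_sum_of_subset_of_nonneg htA (fun u hu _ => cOn_term_nonneg G hu)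
          have hterm : ∀ u ∈ t, 1 - (t.card : ℝ)⁻¹ ≤ 1 - (cOn G A u : ℝ)⁻¹ := by
            intro u hu
            have hle : t.card ≤ cOn G A u := le_cOn G htA ⟨htcl.1, rfl⟩ hu
            have h0 : (0:ℝ) < (t.card : ℝ) := by
              have : 0 < t.card := by omega
              exact_mod_cast this
            have hle' : (t.card : ℝ) ≤ (cOn G A u : ℝ) := by exact_mod_cast hle
            have := inv_anti₀ h0 hle'
            linarith
          have hsum2 : (t.card : ℝ) * (1 - (t.card:ℝ)⁻¹) ≤ ∑ u ∈ t, (1 - (cOn G A u : ℝ)⁻¹) := by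
            calc (t.card : ℝ) * (1 - (t.card:ℝ)⁻¹) = ∑ _u ∈ t, (1 - (t.card:ℝ)⁻¹) := by
                  rw [Finset.sum_const, nsmul_eq_mul]
              _ ≤ _ := Finset.sum_le_sum hterm
          have h3' : (3:ℝ) ≤ (t.card : ℝ) := by
            have : 3 ≤ t.card := by omega
            exact_mod_cast this
          have hval : (t.card : ℝ) * (1 - (t.card:ℝ)⁻¹) = (t.card:ℝ) - 1 := by
            field_simp
          linarith
        rw [hSB0, zero_add, hcardV]
        nlinarith [hmA, h2e', hSA2]
      · -- all clique numbers equal 2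
        push_neg at h3
        have hc2 : ∀ v ∈ A, cOn G A v = 2 := fun v hv =>
          le_antisymm (by have := h3 v hv; omega) (h2le v hv)
        have hSAval : SA = (a:ℝ) / 2 := by
          rw [hSAdef, Finset.sum_congr rfl (fun v hv => by rw [hc2 v hv]),
            Finset.sum_const, nsmul_eq_mul]
          norm_num
          rw [← hadef]
          ring
        have ha2 : 2 ≤ a := by
          have : ({x,y}:Finset V).card ≤ a := Finset.card_le_card hpairA
          rwa [Finset.card_pair hxy.ne] at this
        rcases eq_or_lt_of_le ha2 with ha2' | ha3
        · -- a = 2 : G is isomorphic to Y, contradiction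
          exfalso
          apply hY
          have hA2 : A = {x, y} := by
            refine (Finset.eq_of_subset_of_card_le hpairA ?_).symm
            rw [Finset.card_pair hxy.ne]
            omega
          have hmem : ∀ v : V, v = x ∨ v = y ∨ v = z := by
            intro v
            by_cases hv : v ∈ A
            · rw [hA2] at hv
              rcases Finset.mem_insert.1 hv with h | h
              · exact Or.inl h
              · exact Or.inr (Or.inl (Finset.mem_singleton.1 h))
            · have hvB : v ∈ B := by
                rw [hBdef]
                exact Finset.mem_sdiff.2 ⟨Finset.mem_univ v, hv⟩
              rw [hw0] at hvB
              exact Or.inr (Or.inr (Finset.mem_singleton.1 hvB))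
          have hzx : z ≠ x := fun h => hzA (h ▸ hxA)
          have hzy : z ≠ y := fun h => hzA (h ▸ hyA)
          have hadj_iff : ∀ v w : V, G.Adj v w ↔ (v = x ∧ w = y) ∨ (v = y ∧ w = x) := by
            intro v w
            constructor
            · intro hadj
              rcases hmem v with rfl | rfl | rfl
              · have hwA : w ∈ A := hAB v hxA w hadj
                rw [hA2] at hwA
                rcases Finset.mem_insert.1 hwA with rfl | h
                · exact absurd hadj (G.loopless.irrefl w)
                · exact Or.inl ⟨rfl, Finset.mem_singleton.1 h⟩
              · have hwA : w ∈ A := hAB v hyA w hadj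
                rw [hA2] at hwA
                rcases Finset.mem_insert.1 hwA with h | h
                · exact Or.inr ⟨rfl, h⟩
                · rw [Finset.mem_singleton.1 h] at hadj
                  exact absurd hadj (G.loopless.irrefl _)
              · have hwB : w ∈ B := hBB v hzB w hadj
                rw [hw0] at hwB
                rw [Finset.mem_singleton.1 hwB] at hadj
                exact absurd hadj (G.loopless.irrefl _)
            · rintro (⟨rfl, rfl⟩ | ⟨rfl, rfl⟩)
              · exact hxy
              · exact hxy.symm
          have hYadj : ∀ p q : Fin 3, graphY.Adj p q ↔ ((p = 0 ∧ q = 1) ∨ (p = 1 ∧ q = 0)) :=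
            fun p q => Iff.rfl
          refine ⟨{ toFun := fun v => if v = x then 0 else if v = y then 1 else 2,
                    invFun := fun i => if i = 0 then x else if i = 1 then y else z,
                    left_inv := ?_, right_inv := ?_, map_rel_iff' := ?_ }⟩
          · intro v
            rcases hmem v with rfl | rfl | rfl
            · simp
            · simp [hxy.ne']
            · simp [hzx, hzy]
          · intro i
            fin_cases i <;> simp [hxy.ne, hxy.ne', hzx, hzy]
          · intro v w
            simp only [Equiv.coe_fn_mk]
            rw [hadj_iff, hYadj]
            rcases hmem v with rfl | rfl | rfl <;> rcases hmem w with rfl | rfl | rfl <;>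
              simp [hxy.ne, hxy.ne', hzx, hzy]
        · -- a ≥ 3
          have h4E : 4 * G.edgeFinset.card ≤ a * a := by
            rw [hSAval] at hmA
            have hr : ((4 * G.edgeFinset.card : ℕ) : ℝ) ≤ ((a * a : ℕ) : ℝ) := by
              push_cast
              rw [hEdef] at h2e'
              push_cast at h2e'
              linarith [hmA, h2e']
            exact_mod_cast hr
          have hkey : 4 * G.edgeFinset.card + 4 ≤ a * a + a := by
            rcases Nat.lt_or_ge a 4 with h4 | h4
            · have ha3' : a = 3 := by omega
              rw [ha3'] at h4E ⊢
              omega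
            · nlinarith
          rw [hSB0, zero_add, hcardV, hSAval]
          have hr2 : ((4 * G.edgeFinset.card + 4 : ℕ) : ℝ) ≤ ((a * a + a : ℕ) : ℝ) := by
            exact_mod_cast hkey
          push_cast at hr2
          rw [hEdef]
          push_cast
          linarith
end
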